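/- For any connected graph G on n vertices, md(G) \leq n - 1, with equality if and only if G is a tree. -/

import Mathlib

open SimpleGraph

/-- An edge-coloring `Γ` is a monochromatic disconnection coloring (MD-coloring) of `G`
if every pair of distinct vertices is separated by a monochromatic edge-cut. -/
def IsMDColoring {V : Type*} (G : SimpleGraph V) (Γ : Sym2 V → ℕ) : Prop :=
  ∀ u v : V, u ≠ v → ∃ (c : ℕ) (F : Set (Sym2 V)), F ⊆ G.edgeSet ∧
    (∀ e ∈ F, Γ e = c) ∧ ¬ (G.deleteEdges F).Reachable u v

/-- The monochromatic disconnection number of `G`: the maximum number of colors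
used by an MD-coloring of `G`. -/
noncomputable def md {V : Type*} (G : SimpleGraph V) : ℕ :=
  sSup {n : ℕ | ∃ Γ : Sym2 V → ℕ, IsMDColoring G Γ ∧ (Γ '' G.edgeSet).ncard = n}

namespace MDAux

variable {V : Type*}

lemma split_at_dart {G : SimpleGraph V} {u v : V} (p : G.Walk u v) (d : G.Dart)
    (hd : d ∈ p.darts) :
    ∃ (q : G.Walk u d.toProd.1) (r : G.Walk d.toProd.2 v),
      p.edges = q.edges ++ d.edge :: r.edges := by
  induction p with
  | nil => simp at hd
  | @cons a b c h p ih =>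
    rw [SimpleGraph.Walk.darts_cons, List.mem_cons] at hd
    rcases hd with rfl | hd
    · exact ⟨SimpleGraph.Walk.nil, p, by simp [SimpleGraph.Walk.edges_cons, SimpleGraph.Dart.edge]⟩
    · obtain ⟨q, r, hqr⟩ := ih hd
      exact ⟨SimpleGraph.Walk.cons h q, r, by simp [SimpleGraph.Walk.edges_cons, hqr]⟩

lemma reachable_deleteEdges {G : SimpleGraph V} {x y : V}
    (h : (G.deleteEdges {s(x, y)}).Reachable x y) {u v : V} (huv : G.Reachable u v) :
    (G.deleteEdges {s(x, y)}).Reachable u v := by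
  obtain ⟨p⟩ := huv
  induction p with
  | nil => exact Reachable.refl _
  | @cons a b c hadj p ih =>
    refine Reachable.trans ?_ ih
    by_cases hab : s(a, b) = s(x, y)
    · rcases Sym2.eq_iff.mp hab with ⟨rfl, rfl⟩ | ⟨rfl, rfl⟩
      · exact h
      · exact h.symm
    · exact (SimpleGraph.deleteEdges_adj.mpr ⟨hadj, by simp [hab]⟩).reachable

lemma exists_spanning_tree_aux [Fintype V] :
    ∀ (n : ℕ) (G : SimpleGraph V), G.edgeSet.ncard ≤ n → G.Connected →
      ∃ T, T ≤ G ∧ T.IsTree := by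
  intro n
  induction n with
  | zero =>
    intro G hn hG
    refine ⟨G, le_refl _, hG, ?_⟩
    have hemp : G.edgeSet = ∅ := by
      rw [← Set.ncard_eq_zero (G.edgeSet.toFinite)]
      omega
    intro v c hc
    cases c with
    | nil => exact hc.ne_nil rfl
    | cons h p =>
      have : s(v, _) ∈ G.edgeSet := (SimpleGraph.mem_edgeSet _).mpr h
      rw [hemp] at this
      exact this.elim
  | succ n ih =>
    intro G hn hG
    by_cases hac : G.IsAcyclic
    · exact ⟨G, le_refl _, hG, hac⟩
    · rw [isAcyclic_iff_forall_adj_isBridge] at hac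
      push_neg at hac
      obtain ⟨x, y, hxy, hbr⟩ := hac
      rw [isBridge_iff] at hbr
      push_neg at hbr
      have hreach : (G.deleteEdges {s(x, y)}).Reachable x y := hbr
      have hG'conn : (G.deleteEdges {s(x, y)}).Connected := by
        rw [connected_iff] at hG ⊢
        exact ⟨fun u v => reachable_deleteEdges hreach (hG.1 u v), hG.2⟩
      have hcard : (G.deleteEdges {s(x, y)}).edgeSet.ncard ≤ n := by
        have he : s(x, y) ∈ G.edgeSet := (SimpleGraph.mem_edgeSet _).mpr hxy
        rw [SimpleGraph.edgeSet_deleteEdges,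
          Set.ncard_diff_singleton_of_mem he]
        omega
      obtain ⟨T, hT1, hT2⟩ := ih (G.deleteEdges {s(x, y)}) hcard hG'conn
      exact ⟨T, hT1.trans (SimpleGraph.deleteEdges_le _), hT2⟩

lemma exists_spanning_tree [Fintype V] {G : SimpleGraph V} (hG : G.Connected) :
    ∃ T, T ≤ G ∧ T.IsTree :=
  exists_spanning_tree_aux _ G le_rfl hG

lemma exists_tree_edge_color {G T : SimpleGraph V} (hTG : T ≤ G) (hT : T.Connected)
    {Γ : Sym2 V → ℕ} (hΓ : IsMDColoring G Γ) {u v : V} (huv : G.Adj u v) :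
    ∃ t ∈ T.edgeSet, Γ t = Γ s(u, v) := by
  obtain ⟨c, F, hFsub, hmono, hun⟩ := hΓ u v huv.ne
  have heF : s(u, v) ∈ F := by
    by_contra h
    exact hun (SimpleGraph.deleteEdges_adj.mpr ⟨huv, h⟩).reachable
  obtain ⟨p⟩ := hT.preconnected u v
  have hex : ∃ t ∈ p.edges, t ∈ F := by
    by_contra h
    push_neg at h
    refine hun ⟨p.transfer _ fun e he => ?_⟩
    rw [SimpleGraph.edgeSet_deleteEdges]
    exact ⟨SimpleGraph.edgeSet_mono hTG (p.edges_subset_edgeSet he), h e he⟩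
  obtain ⟨t, htp, htF⟩ := hex
  exact ⟨t, p.edges_subset_edgeSet htp, (hmono t htF).trans (hmono _ heF).symm⟩

lemma dart_color_eq {G T : SimpleGraph V} (hTG : T ≤ G)
    {Γ : Sym2 V → ℕ} (hΓ : IsMDColoring G Γ) (hinj : Set.InjOn Γ T.edgeSet)
    {u v : V} (huv : G.Adj u v) (p : T.Walk u v) (hnd : p.edges.Nodup)
    {d : T.Dart} (hd : d ∈ p.darts) : Γ d.edge = Γ s(u, v) := by
  obtain ⟨c, F, hFsub, hmono, hun⟩ := hΓ d.toProd.1 d.toProd.2 d.adj.ne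
  have hdF : d.edge ∈ F := by
    by_contra h
    exact hun (SimpleGraph.deleteEdges_adj.mpr ⟨hTG d.adj, h⟩).reachable
  by_contra hne
  have heF : s(u, v) ∉ F := fun hmem => hne ((hmono _ hdF).trans (hmono _ hmem).symm)
  obtain ⟨q, r, hqr⟩ := split_at_dart p d hd
  rw [hqr] at hnd
  have hdq : d.edge ∉ q.edges := fun hmem =>
    (List.disjoint_of_nodup_append hnd) hmem List.mem_cons_self
  have hdr : d.edge ∉ r.edges := (List.nodup_cons.mp hnd.of_append_right).1
  have hq : ∀ t ∈ q.edges, t ∉ F := by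
    intro t ht htF
    have : t = d.edge :=
      hinj (q.edges_subset_edgeSet ht) d.edge_mem ((hmono t htF).trans (hmono _ hdF).symm)
    rw [this] at ht
    exact hdq ht
  have hr : ∀ t ∈ r.edges, t ∉ F := by
    intro t ht htF
    have : t = d.edge :=
      hinj (r.edges_subset_edgeSet ht) d.edge_mem ((hmono t htF).trans (hmono _ hdF).symm)
    rw [this] at ht
    exact hdr ht
  have hqH : (G.deleteEdges F).Reachable d.toProd.1 u :=
    ⟨(q.transfer _ fun e he => by
      rw [SimpleGraph.edgeSet_deleteEdges]
      exact ⟨SimpleGraph.edgeSet_mono hTG (q.edges_subset_edgeSet he), hq e he⟩).reverse⟩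
  have hrH : (G.deleteEdges F).Reachable v d.toProd.2 :=
    ⟨(r.transfer _ fun e he => by
      rw [SimpleGraph.edgeSet_deleteEdges]
      exact ⟨SimpleGraph.edgeSet_mono hTG (r.edges_subset_edgeSet he), hr e he⟩).reverse⟩
  have huvH : (G.deleteEdges F).Adj u v := SimpleGraph.deleteEdges_adj.mpr ⟨huv, heF⟩
  exact hun (hqH.trans (huvH.reachable.trans hrH))

lemma eq_of_injOn {G T : SimpleGraph V} (hTG : T ≤ G) (hT : T.IsTree)
    {Γ : Sym2 V → ℕ} (hΓ : IsMDColoring G Γ) (hinj : Set.InjOn Γ T.edgeSet) :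
    G = T := by
  classical
  refine le_antisymm (SimpleGraph.edgeSet_subset_edgeSet.mp fun e he => ?_) hTG
  induction e with
  | _ u v =>
  have huv : G.Adj u v := (SimpleGraph.mem_edgeSet _).mp he
  by_contra htuv
  rw [SimpleGraph.mem_edgeSet] at htuv
  obtain ⟨w⟩ := hT.isConnected.preconnected u v
  obtain ⟨p, hp⟩ : ∃ p : T.Walk u v, p.IsPath := ⟨w.toPath.1, w.toPath.2⟩
  cases p with
  | nil => exact huv.ne rfl
  | @cons _ b _ h1 p1 =>
    cases p1 with
    | nil => exact htuv h1
    | @cons _ c _ h2 p2 =>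
      have hnd : (SimpleGraph.Walk.cons h1 (SimpleGraph.Walk.cons h2 p2)).edges.Nodup :=
        hp.isTrail.edges_nodup
      have hd1 : (⟨(u, b), h1⟩ : T.Dart) ∈
          (SimpleGraph.Walk.cons h1 (SimpleGraph.Walk.cons h2 p2)).darts := by
        simp [SimpleGraph.Walk.darts_cons]
      have hd2 : (⟨(b, c), h2⟩ : T.Dart) ∈
          (SimpleGraph.Walk.cons h1 (SimpleGraph.Walk.cons h2 p2)).darts := by
        simp [SimpleGraph.Walk.darts_cons]
      have hc1 := dart_color_eq hTG hΓ hinj huv _ hnd hd1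
      have hc2 := dart_color_eq hTG hΓ hinj huv _ hnd hd2
      have heq : s(u, b) = s(b, c) :=
        hinj ((SimpleGraph.mem_edgeSet _).mpr h1) ((SimpleGraph.mem_edgeSet _).mpr h2)
          (hc1.trans hc2.symm)
      rw [SimpleGraph.Walk.edges_cons, SimpleGraph.Walk.edges_cons, List.nodup_cons] at hnd
      exact hnd.1 (by rw [heq]; exact List.mem_cons_self)

lemma isMDColoring_of_isTree {G : SimpleGraph V} (hG : G.IsTree) (Γ : Sym2 V → ℕ) :
    IsMDColoring G Γ := by
  classical
  intro u v hne
  obtain ⟨w⟩ := hG.isConnected.preconnected u v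
  obtain ⟨p, hp⟩ : ∃ p : G.Walk u v, p.IsPath := ⟨w.toPath.1, w.toPath.2⟩
  cases p with
  | nil => exact absurd rfl hne
  | @cons _ b _ h1 q =>
    refine ⟨Γ s(u, b), {s(u, b)}, ?_, ?_, ?_⟩
    · intro e he
      rw [Set.mem_singleton_iff] at he
      rw [he]
      exact (SimpleGraph.mem_edgeSet _).mpr h1
    · intro e he
      rw [Set.mem_singleton_iff] at he
      rw [he]
    · intro hreach
      have hbridge : ¬(G \ fromEdgeSet {s(u, b)}).Reachable u b :=
        ((isBridge_iff.mp ((isAcyclic_iff_forall_adj_isBridge.mp hG.2) h1)))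
      apply hbridge
      have hqreach : (G.deleteEdges {s(u, b)}).Reachable b v := by
        refine ⟨q.transfer _ fun e he => ?_⟩
        rw [SimpleGraph.edgeSet_deleteEdges]
        refine ⟨q.edges_subset_edgeSet he, ?_⟩
        intro hmem
        rw [Set.mem_singleton_iff] at hmem
        rw [hmem] at he
        exact ((SimpleGraph.Walk.cons_isPath_iff h1 q).mp hp).2
          (q.fst_mem_support_of_mem_edges he)
      exact hreach.trans hqreach.symm

lemma tree_ncard [Fintype V] {T : SimpleGraph V} (hT : T.IsTree) :
    T.edgeSet.ncard = Fintype.card V - 1 := by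
  classical
  letI : Fintype ↥T.edgeSet := (T.edgeSet.toFinite).fintype
  rw [← SimpleGraph.coe_edgeFinset, Set.ncard_coe_finset]
  have h := hT.card_edgeFinset
  omega

lemma image_subset_tree_image {G T : SimpleGraph V} (hTG : T ≤ G) (hT : T.Connected)
    {Γ : Sym2 V → ℕ} (hΓ : IsMDColoring G Γ) :
    Γ '' G.edgeSet ⊆ Γ '' T.edgeSet := by
  rintro _ ⟨e, he, rfl⟩
  induction e with
  | _ x y =>
  obtain ⟨t, ht, hte⟩ := exists_tree_edge_color hTG hT hΓ ((SimpleGraph.mem_edgeSet _).mp he)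
  exact ⟨t, ht, hte⟩

lemma ncard_le [Fintype V] {G : SimpleGraph V} (hG : G.Connected)
    {Γ : Sym2 V → ℕ} (hΓ : IsMDColoring G Γ) :
    (Γ '' G.edgeSet).ncard ≤ Fintype.card V - 1 := by
  obtain ⟨T, hTG, hT⟩ := exists_spanning_tree hG
  calc (Γ '' G.edgeSet).ncard
      ≤ (Γ '' T.edgeSet).ncard :=
        Set.ncard_le_ncard (image_subset_tree_image hTG hT.isConnected hΓ) (Set.toFinite _)
    _ ≤ T.edgeSet.ncard := Set.ncard_image_le (Set.toFinite _)
    _ = Fintype.card V - 1 := tree_ncard hT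

lemma isTree_of_ncard_eq [Fintype V] {G : SimpleGraph V} (hG : G.Connected)
    {Γ : Sym2 V → ℕ} (hΓ : IsMDColoring G Γ)
    (hc : (Γ '' G.edgeSet).ncard = Fintype.card V - 1) : G.IsTree := by
  obtain ⟨T, hTG, hT⟩ := exists_spanning_tree hG
  have h1 : (Γ '' T.edgeSet).ncard ≤ T.edgeSet.ncard := Set.ncard_image_le (Set.toFinite _)
  have h2 : Fintype.card V - 1 ≤ (Γ '' T.edgeSet).ncard := by
    rw [← hc]
    exact Set.ncard_le_ncard (image_subset_tree_image hTG hT.isConnected hΓ) (Set.toFinite _)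
  have h3 : (Γ '' T.edgeSet).ncard = T.edgeSet.ncard := by
    have := tree_ncard hT
    omega
  have hinj : Set.InjOn Γ T.edgeSet := Set.injOn_of_ncard_image_eq h3 (Set.toFinite _)
  rw [eq_of_injOn hTG hT hΓ hinj]
  exact hT

lemma isMDColoring_const {G : SimpleGraph V} : IsMDColoring G fun _ => 0 := by
  intro u v hne
  refine ⟨0, G.edgeSet, subset_rfl, fun _ _ => rfl, ?_⟩
  rw [SimpleGraph.deleteEdges_edgeSet, sdiff_self]
  exact fun h => hne (SimpleGraph.reachable_bot.mp h)

end MDAux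

open MDAux in
theorem stmt_9 {V : Type*} [Fintype V] (G : SimpleGraph V) (hG : G.Connected) :
    md G ≤ Fintype.card V - 1 ∧ (md G = Fintype.card V - 1 ↔ G.IsTree) := by
  classical
  have hmd : md G =
      sSup {n : ℕ | ∃ Γ : Sym2 V → ℕ, IsMDColoring G Γ ∧ (Γ '' G.edgeSet).ncard = n} := rfl
  set S := {n : ℕ | ∃ Γ : Sym2 V → ℕ, IsMDColoring G Γ ∧ (Γ '' G.edgeSet).ncard = n} with hS
  have hne : S.Nonempty :=
    ⟨(((fun _ => 0 : Sym2 V → ℕ)) '' G.edgeSet).ncard, fun _ => 0, isMDColoring_const, rfl⟩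
  have hub : ∀ n ∈ S, n ≤ Fintype.card V - 1 := by
    rintro n ⟨Γ, hΓ, rfl⟩
    exact ncard_le hG hΓ
  have hbdd : BddAbove S := ⟨_, hub⟩
  have hle : md G ≤ Fintype.card V - 1 := by
    rw [hmd]
    exact csSup_le hne hub
  refine ⟨hle, ⟨fun h => ?_, fun h => ?_⟩⟩
  · have hmem : Fintype.card V - 1 ∈ S := by
      have := Nat.sSup_mem hne hbdd
      rwa [← hmd, h] at this
    obtain ⟨Γ, hΓ, hcard⟩ := hmem
    exact isTree_of_ncard_eq hG hΓ hcard
  · obtain ⟨f, hf⟩ := Countable.exists_injective_nat (Sym2 V)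
    have hmem : Fintype.card V - 1 ∈ S :=
      ⟨f, isMDColoring_of_isTree h f, by
        rw [Set.ncard_image_of_injective _ hf]
        exact tree_ncard h⟩
    rw [hmd]
    exact le_antisymm (csSup_le hne hub) (le_csSup hbdd hmem)
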